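/- Let f(x,θ) = n x^{n−1}/θⁿ on [0,θ] and g(x,θ) = n(n+1)(1 − x/θ) x^{n−1}/θⁿ on [0,θ]. Then g(·,θ) is a probability density, and for T(x) = (n+1)x/n one has λ(θ) := ∫₀^θ T(x) g(x,θ) dx = (n+1)θ/(n+2) and the generalized Fisher information N(θ) := ∫₀^θ (∂_θ g(x,θ))²/f(x,θ) dx = n(n+1)²/((n+2)θ²), so that (λ′(θ))²/N(θ) = θ²/(n(n+2)) = Var_{f_θ}(T). -/

import Mathlib

open intervalIntegral

lemma int_poly (θ a b c : ℝ) (m : ℕ) :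
    (∫ x in (0:ℝ)..θ, (a * x ^ m + b * x ^ (m+1) + c * x ^ (m+2))) =
      a * θ ^ (m+1) / (m+1) + b * θ ^ (m+2) / (m+2) + c * θ ^ (m+3) / (m+3) := by
  have h1 : IntervalIntegrable (fun x : ℝ => a * x ^ m) MeasureTheory.volume 0 θ :=
    (continuous_const.mul (continuous_pow m)).intervalIntegrable _ _
  have h2 : IntervalIntegrable (fun x : ℝ => b * x ^ (m+1)) MeasureTheory.volume 0 θ :=
    (continuous_const.mul (continuous_pow _)).intervalIntegrable _ _
  have h3 : IntervalIntegrable (fun x : ℝ => c * x ^ (m+2)) MeasureTheory.volume 0 θ :=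
    (continuous_const.mul (continuous_pow _)).intervalIntegrable _ _
  rw [intervalIntegral.integral_add (h1.add h2) h3, intervalIntegral.integral_add h1 h2,
    intervalIntegral.integral_const_mul, intervalIntegral.integral_const_mul,
    intervalIntegral.integral_const_mul, integral_pow, integral_pow, integral_pow]
  simp [zero_pow]
  ring

lemma gderiv (m : ℕ) (θ x : ℝ) (hθ : 0 < θ) (C : ℝ) :
    HasDerivAt (fun t : ℝ => C * (1 - x / t) * x ^ m / t ^ (m+1))
      (C * x ^ m * ((m+2) * x - (m+1) * θ) / θ ^ (m+3)) θ := by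
  have h1 : HasDerivAt (fun t : ℝ => 1 - x / t) (x / θ ^ 2) θ := by
    have h := ((hasDerivAt_inv hθ.ne').const_mul x).const_sub 1
    simp only [div_eq_mul_inv]
    refine h.congr_deriv ?_
    ring
  have hu : HasDerivAt (fun t : ℝ => C * (1 - x / t) * x ^ m)
      (C * (x / θ ^ 2) * x ^ m) θ := (h1.const_mul C).mul_const _
  have hv : HasDerivAt (fun t : ℝ => t ^ (m+1)) ((m+1) * θ ^ m) θ := by
    simpa using hasDerivAt_pow (m+1) θ
  have h := hu.div hv (pow_ne_zero _ hθ.ne')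
  refine h.congr_deriv ?_
  have hθ' := hθ.ne'
  field_simp
  ring

lemma int_congr_poly (θ : ℝ) (hθ : 0 < θ) (F : ℝ → ℝ) (a b c : ℝ) (m : ℕ)
    (hF : ∀ x ∈ Set.Ioc (0:ℝ) θ, F x = a * x ^ m + b * x ^ (m+1) + c * x ^ (m+2)) :
    (∫ x in (0:ℝ)..θ, F x) =
      a * θ ^ (m+1) / (m+1) + b * θ ^ (m+2) / (m+2) + c * θ ^ (m+3) / (m+3) := by
  rw [← int_poly θ a b c m]
  apply intervalIntegral.integral_congr_ae
  filter_upwards with x hx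
  exact hF x (by rwa [Set.uIoc_of_le hθ.le] at hx)

/-- Naudts's generalized Cramér–Rao bound is attained for the uniform-maximum model:
with `f(x,θ) = n x^(n-1)/θⁿ` and escort `g(x,θ) = n(n+1)(1 − x/θ)x^(n-1)/θⁿ` on `[0,θ]`,
`g` is a density, `λ(θ) = (n+1)θ/(n+2)`, `N(θ) = n(n+1)²/((n+2)θ²)`, and
`(λ′(θ))²/N(θ) = θ²/(n(n+2)) = Var_{f_θ}((n+1)X/n)`. -/
theorem uniform_max_naudts_bound_attained
    (n : ℕ) (hn : 1 ≤ n) (θ : ℝ) (hθ : 0 < θ)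
    (f g : ℝ → ℝ → ℝ)
    (hf : ∀ x t, f x t = n * x ^ (n - 1) / t ^ n)
    (hg : ∀ x t, g x t = n * (n + 1) * (1 - x / t) * x ^ (n - 1) / t ^ n) :
    (∫ x in (0:ℝ)..θ, g x θ) = 1 ∧
    (∫ x in (0:ℝ)..θ, ((n + 1) * x / n) * g x θ) = (n + 1) * θ / (n + 2) ∧
    (∫ x in (0:ℝ)..θ, (deriv (fun t => g x t) θ) ^ 2 / f x θ) =
      n * (n + 1) ^ 2 / ((n + 2) * θ ^ 2) ∧
    (deriv (fun t => (n + 1) * t / (n + 2) : ℝ → ℝ) θ) ^ 2 /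
        (n * (n + 1) ^ 2 / ((n + 2) * θ ^ 2)) = θ ^ 2 / (n * (n + 2)) ∧
    θ ^ 2 / (n * (n + 2)) =
      ∫ x in (0:ℝ)..θ, ((n + 1) * x / n - θ) ^ 2 * f x θ := by
  obtain ⟨m, rfl⟩ : ∃ m, n = m + 1 := ⟨n - 1, (Nat.succ_pred_eq_of_pos hn).symm⟩
  have hθ' : θ ≠ 0 := hθ.ne'
  have hm1 : ((m:ℝ) + 1) ≠ 0 := by positivity
  have hm2 : ((m:ℝ) + 2) ≠ 0 := by positivity
  have hm3 : ((m:ℝ) + 3) ≠ 0 := by positivity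
  -- derivative of g in t
  have hD : ∀ x : ℝ, deriv (fun t => g x t) θ =
      (((m:ℕ)+1 : ℕ) : ℝ) * ((((m:ℕ)+1 : ℕ) : ℝ) + 1) * x ^ m * (((m:ℝ)+2) * x - ((m:ℝ)+1) * θ) / θ ^ (m+3) := by
    intro x
    have h := gderiv m θ x hθ ((((m:ℕ)+1 : ℕ) : ℝ) * ((((m:ℕ)+1 : ℕ) : ℝ) + 1))
    have hfun : (fun t => g x t) =
        (fun t : ℝ => (((m:ℕ)+1 : ℕ) : ℝ) * ((((m:ℕ)+1 : ℕ) : ℝ) + 1) * (1 - x / t) * x ^ m / t ^ (m+1)) := by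
      funext t
      rw [hg]
      norm_num
    rw [hfun, h.deriv]
  refine ⟨?_, ?_, ?_, ?_, ?_⟩
  · rw [int_congr_poly θ hθ _ (((m:ℝ)+1)*((m:ℝ)+2)/θ^(m+1)) (-(((m:ℝ)+1)*((m:ℝ)+2)/θ^(m+2))) 0 m ?_]
    · field_simp
      try ring
    · intro x hx
      rw [hg]
      push_cast
      field_simp
      ring
  · rw [int_congr_poly θ hθ _ 0 (((m:ℝ)+2)^2/θ^(m+1)) (-(((m:ℝ)+2)^2/θ^(m+2))) m ?_]
    · field_simp
      push_cast
      ring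
    · intro x hx
      rw [hg]
      push_cast
      field_simp
      ring
  · rw [int_congr_poly θ hθ _ (((m:ℝ)+1)^3*((m:ℝ)+2)^2/θ^(m+3)) (-(2*((m:ℝ)+1)^2*((m:ℝ)+2)^3/θ^(m+4)))
      (((m:ℝ)+1)*((m:ℝ)+2)^4/θ^(m+5)) m ?_]
    · push_cast
      field_simp
      ring
    · intro x hx
      have hx0 : x ≠ 0 := ne_of_gt hx.1
      rw [hD x, hf]
      push_cast
      field_simp
      ring
  · have hd : deriv (fun t : ℝ => ((((m:ℕ)+1:ℕ):ℝ) + 1) * t / ((((m:ℕ)+1:ℕ):ℝ) + 2)) θ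
        = ((((m:ℕ)+1:ℕ):ℝ) + 1) / ((((m:ℕ)+1:ℕ):ℝ) + 2) := by
      have : (fun t : ℝ => ((((m:ℕ)+1:ℕ):ℝ) + 1) * t / ((((m:ℕ)+1:ℕ):ℝ) + 2))
          = (fun t : ℝ => (((((m:ℕ)+1:ℕ):ℝ) + 1) / ((((m:ℕ)+1:ℕ):ℝ) + 2)) * t) := by
        funext t; ring
      rw [this, deriv_const_mul_field]
      simp
    rw [hd]
    push_cast
    field_simp
  · rw [int_congr_poly θ hθ _ (((m:ℝ)+1)*θ^2/θ^(m+1)) (-(2*((m:ℝ)+2)*θ/θ^(m+1)))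
      (((m:ℝ)+2)^2/(((m:ℝ)+1)*θ^(m+1))) m ?_]
    · push_cast
      field_simp
      ring
    · intro x hx
      have hx0 : x ≠ 0 := ne_of_gt hx.1
      rw [hf]
      push_cast
      field_simp
      ring
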